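/- Let a > 0 and G_c > 0, and for h > 0 define F(h) = G_c·h·(1 + ⌈2a/h⌉ + √(π·⌈2a/h⌉)). Then there exist constants C > 0 and h₀ > 0 such that for all 0 < h ≤ h₀, |F(h) − 2a·G_c − G_c·√(2π a h)| ≤ C·h; i.e., F(h) = G_c·2a + G_c·√(2π a h) + O(h) as h → 0. -/
import Mathlib


/-- Asymptotics of the optimal EE inelastic energy:
`F(h) = G_c h (1 + ⌈2a/h⌉ + √(π⌈2a/h⌉)) = 2a·G_c + G_c·√(2πah) + O(h)` as `h → 0`. -/
theorem optimal_energy_asymptotics (a Gc : ℝ) (ha : 0 < a) (hGc : 0 < Gc) :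
    ∃ C > (0 : ℝ), ∃ h₀ > (0 : ℝ), ∀ h : ℝ, 0 < h → h ≤ h₀ →
      |Gc * h * (1 + (⌈2 * a / h⌉ : ℝ) + Real.sqrt (Real.pi * (⌈2 * a / h⌉ : ℝ)))
          - 2 * a * Gc - Gc * Real.sqrt (2 * Real.pi * a * h)| ≤ C * h := by
  have hpi := Real.pi_pos
  refine ⟨Gc * (2 + Real.sqrt Real.pi), by positivity, 1, one_pos, ?_⟩
  intro h hh _
  set n : ℝ := (⌈2 * a / h⌉ : ℝ) with hndef
  have hceil1 : 2 * a / h ≤ n := Int.le_ceil _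
  have hceil2 : n < 2 * a / h + 1 := Int.ceil_lt_add_one _
  have h1 : 2 * a ≤ n * h := by
    rw [div_le_iff₀ hh] at hceil1; linarith
  have h2 : n * h < 2 * a + h := by
    have := (mul_lt_mul_of_pos_right hceil2 hh)
    rw [add_mul, div_mul_cancel₀ _ (ne_of_gt hh)] at this
    linarith
  have hn0 : 0 < n := by nlinarith
  -- sqrt relations
  have hX : Real.sqrt (Real.pi * n) * h = Real.sqrt (Real.pi * n * h ^ 2) := by
    rw [show Real.pi * n * h ^ 2 = (Real.pi * n) * h ^ 2 by ring,
      Real.sqrt_mul (by positivity : (0:ℝ) ≤ Real.pi * n), Real.sqrt_sq hh.le]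
  set Y := Real.sqrt (2 * Real.pi * a * h) with hYdef
  have hY0 : 0 ≤ Y := Real.sqrt_nonneg _
  have hYsq : Y ^ 2 = 2 * Real.pi * a * h := Real.sq_sqrt (by positivity)
  have hsp : Real.sqrt Real.pi ^ 2 = Real.pi := Real.sq_sqrt hpi.le
  have hsp0 : 0 ≤ Real.sqrt Real.pi := Real.sqrt_nonneg _
  have hupper : Real.sqrt (Real.pi * n * h ^ 2) ≤ Y + Real.sqrt Real.pi * h := by
    have hb : Real.pi * n * h ^ 2 ≤ (Y + Real.sqrt Real.pi * h) ^ 2 := by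
      have hbb : Real.pi * (n * h) * h ≤ Real.pi * (2 * a + h) * h := by nlinarith
      nlinarith [hYsq, hsp, mul_nonneg (mul_nonneg hY0 hsp0) hh.le, hbb]
    calc Real.sqrt (Real.pi * n * h ^ 2) ≤ Real.sqrt ((Y + Real.sqrt Real.pi * h) ^ 2) :=
          Real.sqrt_le_sqrt hb
      _ = Y + Real.sqrt Real.pi * h := Real.sqrt_sq (by positivity)
  have hlower : Y ≤ Real.sqrt (Real.pi * n * h ^ 2) := by
    apply Real.sqrt_le_sqrt
    nlinarith
  rw [abs_le]
  constructor <;> nlinarith [mul_le_mul_of_nonneg_left hupper hGc.le,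
    mul_le_mul_of_nonneg_left hlower hGc.le, hX,
    mul_le_mul_of_nonneg_left h1 hGc.le, mul_le_mul_of_nonneg_left h2.le hGc.le]
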